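/- arXiv:2207.08881 — 3 statements merged into one kernel-verified Lean document; each statement's English description precedes it below -/
import Mathlib

section
/- For every a>0, every integer m≥1, every integer ℓ≥1, every continuous function f on [−a,a], every ω>0, every choice of kernel κ ∈ {sin, cos}, and every y ∈ [−a,a], the approximate integral satisfies |I^ω_{m,ℓ}(f,y)| ≤ 2a · ‖C_{m,ℓ}‖_∞ · ‖f‖, where ‖f‖ = max_{x∈[−a,a]}|f(x)| and ‖·‖_∞ is the maximum absolute row sum matrix norm. -/
open Real MeasureTheory
open Matrix

/-- Bernstein basis polynomial on `[-a, a]`. -/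
noncomputable def pbar (a : ℝ) (m k : ℕ) (x : ℝ) : ℝ :=
  (Nat.choose m k : ℝ) * ((a + x) / (2 * a)) ^ k * ((a - x) / (2 * a)) ^ (m - k)

/-- Equispaced nodes `t_k = -a + 2ak/m` on `[-a, a]`. -/
noncomputable def node (a : ℝ) (m k : ℕ) : ℝ := -a + 2 * a * k / m

/-- The Bernstein operator on `[-a, a]`. -/
noncomputable def Bop (a : ℝ) (m : ℕ) (f : ℝ → ℝ) (x : ℝ) : ℝ :=
  ∑ k ∈ Finset.range (m + 1), f (node a m k) * pbar a m k x

/-- The generalized Bernstein polynomial `B̄_{m,ℓ}(f) = f - (Id - B̄_m)^ℓ f`. -/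
noncomputable def GB (a : ℝ) (m ℓ : ℕ) (f : ℝ → ℝ) : ℝ → ℝ :=
  f - (fun g => g - Bop a m g)^[ℓ] f

/-- The matrix `A` with entries `A_{ij} = p̄_{m,j}(t_i)`. -/
noncomputable def Amat (a : ℝ) (m : ℕ) : Matrix (Fin (m + 1)) (Fin (m + 1)) ℝ :=
  fun i j => pbar a m j (node a m i)

/-- The matrix `C_{m,ℓ} = Σ_{s=0}^{ℓ-1} (I - A)^s`. -/
noncomputable def Cmat (a : ℝ) (m ℓ : ℕ) : Matrix (Fin (m + 1)) (Fin (m + 1)) ℝ :=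
  ∑ s ∈ Finset.range ℓ, (1 - Amat a m) ^ s

/-- Maximum absolute row sum matrix norm. -/
noncomputable def infNorm {n : ℕ} (M : Matrix (Fin n) (Fin n) ℝ) : ℝ :=
  ⨆ i, ∑ j, |M i j|

/-- Sup norm of `f` over `[-a, a]`. -/
noncomputable def supNorm (a : ℝ) (f : ℝ → ℝ) : ℝ :=
  sSup ((fun x => |f x|) '' Set.Icc (-a) a)

/-- The approximate integral `I^ω_{m,ℓ}(f, y) = ∫_{-a}^a κ(ω(y-x)) B̄_{m,ℓ}(f, x) dx`. -/
noncomputable def Iapprox (a : ℝ) (m ℓ : ℕ) (ω : ℝ) (κ f : ℝ → ℝ) (y : ℝ) : ℝ :=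
  ∫ x in (-a)..a, κ (ω * (y - x)) * GB a m ℓ f x

lemma pbar_nonneg {a : ℝ} (ha : 0 < a) (m k : ℕ) {x : ℝ} (hx : x ∈ Set.Icc (-a) a) :
    0 ≤ pbar a m k x := by
  obtain ⟨h1, h2⟩ := hx
  have h2a : (0:ℝ) < 2 * a := by linarith
  unfold pbar
  apply mul_nonneg (mul_nonneg (Nat.cast_nonneg _) _)
  · exact pow_nonneg (div_nonneg (by linarith) h2a.le) _
  · exact pow_nonneg (div_nonneg (by linarith) h2a.le) _

lemma pbar_sum {a : ℝ} (ha : a ≠ 0) (m : ℕ) (x : ℝ) :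
    ∑ k ∈ Finset.range (m + 1), pbar a m k x = 1 := by
  have h : (a + x) / (2 * a) + (a - x) / (2 * a) = 1 := by
    field_simp
    ring
  calc ∑ k ∈ Finset.range (m + 1), pbar a m k x
      = ((a + x) / (2 * a) + (a - x) / (2 * a)) ^ m := by
        rw [add_pow]
        exact Finset.sum_congr rfl fun k _ => by unfold pbar; ring
    _ = 1 := by rw [h, one_pow]

lemma node_mem {a : ℝ} (ha : 0 < a) {m k : ℕ} (hm : 1 ≤ m) (hk : k ≤ m) :
    node a m k ∈ Set.Icc (-a) a := by
  have hmpos : (0:ℝ) < m := by exact_mod_cast hm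
  have hkc : (k:ℝ) ≤ m := by exact_mod_cast hk
  have h1 : 0 ≤ 2 * a * k / m := by positivity
  have h2 : 2 * a * (k:ℝ) / m ≤ 2 * a := by
    rw [div_le_iff₀ hmpos]; nlinarith
  constructor <;> (unfold node; linarith)

lemma Bop_fin (a : ℝ) (m : ℕ) (g : ℝ → ℝ) (x : ℝ) :
    Bop a m g x = ∑ j : Fin (m + 1), g (node a m j) * pbar a m j x := by
  rw [Bop, ← Fin.sum_univ_eq_sum_range]

lemma iter_node (a : ℝ) (m : ℕ) (f : ℝ → ℝ) (s : ℕ) (i : Fin (m + 1)) :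
    (fun g => g - Bop a m g)^[s] f (node a m i) =
      ((1 - Amat a m) ^ s *ᵥ (fun j : Fin (m + 1) => f (node a m j))) i := by
  induction s generalizing i with
  | zero => simp
  | succ s ih =>
    rw [Function.iterate_succ_apply']
    simp only [Pi.sub_apply]
    rw [Bop_fin, pow_succ', ← Matrix.mulVec_mulVec]
    rw [Matrix.sub_mulVec, Matrix.one_mulVec]
    simp only [Pi.sub_apply, ih]
    congr 1
    simp only [Matrix.mulVec, dotProduct, Amat, ih]
    exact Finset.sum_congr rfl fun j _ => mul_comm _ _

lemma GB_eq (a : ℝ) (m ℓ : ℕ) (f : ℝ → ℝ) (x : ℝ) :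
    GB a m ℓ f x = ∑ k : Fin (m + 1),
      (Cmat a m ℓ *ᵥ (fun j : Fin (m + 1) => f (node a m j))) k * pbar a m k x := by
  set v : Fin (m + 1) → ℝ := fun j => f (node a m j) with hv
  have tele := Finset.sum_range_sub' (fun s => (fun g => g - Bop a m g)^[s] f x) ℓ
  simp only [Function.iterate_zero_apply] at tele
  have : GB a m ℓ f x
      = ∑ s ∈ Finset.range ℓ, Bop a m ((fun g => g - Bop a m g)^[s] f) x := by
    rw [GB, Pi.sub_apply, ← tele]
    refine Finset.sum_congr rfl fun s _ => ?_
    rw [Function.iterate_succ_apply']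
    simp
  rw [this]
  have step : ∀ s ∈ Finset.range ℓ, Bop a m ((fun g => g - Bop a m g)^[s] f) x
      = ∑ k : Fin (m + 1), ((1 - Amat a m) ^ s *ᵥ v) k * pbar a m k x := by
    intro s _
    rw [Bop_fin]
    exact Finset.sum_congr rfl fun k _ => by rw [iter_node]
  rw [Finset.sum_congr rfl step, Finset.sum_comm]
  refine Finset.sum_congr rfl fun k _ => ?_
  rw [← Finset.sum_mul]
  congr 1
  rw [Cmat]
  simp only [Matrix.mulVec, dotProduct, Finset.sum_apply, Finset.sum_mul]
  rw [Finset.sum_comm]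
  refine Finset.sum_congr rfl fun j _ => ?_
  rw [Matrix.sum_apply, Finset.sum_mul]

theorem stmt0 (a : ℝ) (ha : 0 < a) (m ℓ : ℕ) (hm : 1 ≤ m) (hℓ : 1 ≤ ℓ)
    (f : ℝ → ℝ) (hf : ContinuousOn f (Set.Icc (-a) a))
    (ω : ℝ) (hω : 0 < ω) (κ : ℝ → ℝ) (hκ : κ = Real.sin ∨ κ = Real.cos)
    (y : ℝ) (hy : y ∈ Set.Icc (-a) a) :
    |Iapprox a m ℓ ω κ f y| ≤ 2 * a * infNorm (Cmat a m ℓ) * supNorm a f := by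
  set v : Fin (m + 1) → ℝ := fun j => f (node a m j) with hv
  have hbdd : BddAbove ((fun x => |f x|) '' Set.Icc (-a) a) :=
    (isCompact_Icc.image_of_continuousOn hf.abs).bddAbove
  have hsup : ∀ t ∈ Set.Icc (-a) a, |f t| ≤ supNorm a f :=
    fun t ht => le_csSup hbdd ⟨t, ht, rfl⟩
  have hsup0 : 0 ≤ supNorm a f :=
    le_trans (abs_nonneg _) (hsup a ⟨by linarith, le_refl a⟩)
  have hrow : ∀ i, ∑ j, |Cmat a m ℓ i j| ≤ infNorm (Cmat a m ℓ) :=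
    fun i => by
      rw [infNorm]
      exact le_ciSup (f := fun i => ∑ j, |Cmat a m ℓ i j|)
        (Set.Finite.bddAbove (Set.finite_range _)) i
  set M := infNorm (Cmat a m ℓ) * supNorm a f with hM
  have hCv : ∀ k, |(Cmat a m ℓ *ᵥ v) k| ≤ M := by
    intro k
    calc |(Cmat a m ℓ *ᵥ v) k| = |∑ j, Cmat a m ℓ k j * v j| := by
          simp [Matrix.mulVec, dotProduct]
      _ ≤ ∑ j, |Cmat a m ℓ k j * v j| := Finset.abs_sum_le_sum_abs _ _
      _ ≤ ∑ j, |Cmat a m ℓ k j| * supNorm a f := by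
          refine Finset.sum_le_sum fun j _ => ?_
          rw [abs_mul]
          exact mul_le_mul_of_nonneg_left
            (hsup _ (node_mem ha hm (by omega : (j : ℕ) ≤ m))) (abs_nonneg _)
      _ = (∑ j, |Cmat a m ℓ k j|) * supNorm a f := (Finset.sum_mul _ _ _).symm
      _ ≤ M := mul_le_mul_of_nonneg_right (hrow k) hsup0
  have hGB : ∀ x ∈ Set.Icc (-a) a, |GB a m ℓ f x| ≤ M := by
    intro x hx
    rw [GB_eq]
    calc |∑ k : Fin (m + 1), (Cmat a m ℓ *ᵥ v) k * pbar a m k x|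
        ≤ ∑ k : Fin (m + 1), |(Cmat a m ℓ *ᵥ v) k * pbar a m k x| :=
          Finset.abs_sum_le_sum_abs _ _
      _ ≤ ∑ k : Fin (m + 1), M * pbar a m k x := by
          refine Finset.sum_le_sum fun k _ => ?_
          rw [abs_mul, abs_of_nonneg (pbar_nonneg ha m k hx)]
          exact mul_le_mul_of_nonneg_right (hCv k) (pbar_nonneg ha m k hx)
      _ = M := by
          rw [← Finset.mul_sum, Fin.sum_univ_eq_sum_range (fun k => pbar a m k x),
            pbar_sum ha.ne' m x, mul_one]
  have hκ1 : ∀ t : ℝ, |κ t| ≤ 1 := by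
    rcases hκ with h | h <;> subst h <;> intro t
    · exact abs_sin_le_one t
    · exact abs_cos_le_one t
  have hbound : ∀ x ∈ Set.uIoc (-a) a, ‖κ (ω * (y - x)) * GB a m ℓ f x‖ ≤ M := by
    intro x hx
    rw [Set.uIoc_of_le (by linarith : -a ≤ a)] at hx
    have hx' : x ∈ Set.Icc (-a) a := ⟨hx.1.le, hx.2⟩
    rw [Real.norm_eq_abs, abs_mul]
    calc |κ (ω * (y - x))| * |GB a m ℓ f x| ≤ 1 * M :=
        mul_le_mul (hκ1 _) (hGB x hx') (abs_nonneg _)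
          (le_trans (abs_nonneg _) (hκ1 0))
      _ = M := one_mul M
  have key := intervalIntegral.norm_integral_le_of_norm_le_const hbound
  rw [Real.norm_eq_abs] at key
  rw [Iapprox]
  calc |∫ x in (-a)..a, κ (ω * (y - x)) * GB a m ℓ f x| ≤ M * |a - -a| := key
    _ = 2 * a * infNorm (Cmat a m ℓ) * supNorm a f := by
        rw [abs_of_nonneg (by linarith : (0:ℝ) ≤ a - -a), hM]; ring
end

section
/- (Representation of the generalized Bernstein polynomial.) For every a>0, every pair of integers m≥1, ℓ≥1, every function f : [−a,a] → ℝ, and every x ∈ [−a,a], the generalized Bernstein polynomial admits the representation B̄_{m,ℓ}(f,x) = Σ_{j=0}^m ( Σ_{i=0}^m p̄_{m,i}(x) · c_{ij}^{(m,ℓ)} ) · f(t_j), where c_{ij}^{(m,ℓ)} are the entries of the matrix C_{m,ℓ} = Σ_{s=0}^{ℓ−1}(I−A)^s. -/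
open Real MeasureTheory

/-- The exact integral `I^ω(f, y) = ∫_{-a}^a κ(ω(y-x)) f(x) dx`. -/
noncomputable def Iexact (a ω : ℝ) (κ f : ℝ → ℝ) (y : ℝ) : ℝ :=
  ∫ x in (-a)..a, κ (ω * (y - x)) * f x

section Aux

lemma node_iter (a : ℝ) (m : ℕ) (f : ℝ → ℝ) (s : ℕ) (i : Fin (m + 1)) :
    ((fun g => g - Bop a m g)^[s] f) (node a m i) =
      ((1 - Amat a m) ^ s).mulVec (fun j : Fin (m + 1) => f (node a m j)) i := by
  induction s generalizing i with
  | zero => simp [Matrix.mulVec, dotProduct, Matrix.one_apply, Finset.sum_ite_eq]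
  | succ s ih =>
    rw [Function.iterate_succ_apply']
    have h1 : (((fun g => g - Bop a m g)^[s] f) - Bop a m ((fun g => g - Bop a m g)^[s] f))
        (node a m i) = ((fun g => g - Bop a m g)^[s] f) (node a m i)
          - Bop a m ((fun g => g - Bop a m g)^[s] f) (node a m i) := rfl
    rw [h1, Bop]
    rw [← Fin.sum_univ_eq_sum_range
      (fun k => ((fun g => g - Bop a m g)^[s] f) (node a m k) * pbar a m k (node a m i))]
    simp only [ih]
    rw [pow_succ' (1 - Amat a m) s, ← Matrix.mulVec_mulVec]
    simp [Matrix.mulVec, dotProduct, Matrix.sub_apply, Matrix.one_apply, Amat,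
      Finset.sum_sub_distrib, sub_mul, Finset.sum_ite_eq, mul_comm]

end Aux

theorem stmt5 (a : ℝ) (ha : 0 < a) (m ℓ : ℕ) (hm : 1 ≤ m) (hℓ : 1 ≤ ℓ)
    (f : ℝ → ℝ) (x : ℝ) (hx : x ∈ Set.Icc (-a) a) :
    GB a m ℓ f x =
      ∑ j : Fin (m + 1), (∑ i : Fin (m + 1), pbar a m i.val x * Cmat a m ℓ i j) *
        f (node a m j.val) := by
  have key : GB a m ℓ f x = ∑ s ∈ Finset.range ℓ,
      ∑ i : Fin (m + 1),
        ((1 - Amat a m) ^ s).mulVec (fun j : Fin (m + 1) => f (node a m j)) i * pbar a m i x := by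
    have tel : GB a m ℓ f x = ∑ s ∈ Finset.range ℓ,
        (((fun g => g - Bop a m g)^[s] f) x - ((fun g => g - Bop a m g)^[s+1] f) x) := by
      rw [Finset.sum_range_sub' (fun s => ((fun g => g - Bop a m g)^[s] f) x)]
      simp [GB]
    rw [tel]
    refine Finset.sum_congr rfl fun s _ => ?_
    rw [Function.iterate_succ_apply']
    have h1 : (((fun g => g - Bop a m g)^[s] f) - Bop a m ((fun g => g - Bop a m g)^[s] f)) x
        = ((fun g => g - Bop a m g)^[s] f) x - Bop a m ((fun g => g - Bop a m g)^[s] f) x := rfl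
    rw [h1, sub_sub_cancel, Bop,
      ← Fin.sum_univ_eq_sum_range
        (fun k => ((fun g => g - Bop a m g)^[s] f) (node a m k) * pbar a m k x)]
    refine Finset.sum_congr rfl fun i _ => ?_
    rw [node_iter]
  rw [key]
  simp only [Matrix.mulVec, dotProduct, Cmat, Matrix.sum_apply, Finset.sum_mul,
    Finset.mul_sum]
  refine Eq.trans Finset.sum_comm ?_
  refine Eq.trans (Finset.sum_congr rfl fun i _ => Finset.sum_comm) ?_
  refine Eq.trans Finset.sum_comm ?_
  exact Finset.sum_congr rfl fun j _ => Finset.sum_congr rfl fun i _ =>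
    Finset.sum_congr rfl fun s _ => by ring
end

section
/- (Stirling-type bound for the maximum of the Bernstein basis.) For every integer m≥2 and every integer i with 1 ≤ i ≤ m−1, one has C(m,i) · i^i · (m−i)^{m−i} / m^m ≤ e^{1/12} · √( m / (2π · i · (m−i)) ). In particular, C(m,i)·(i/m)^i·((m−i)/m)^{m−i} ≤ e^{1/12} · √m / √(2π i). -/
open Real
set_option maxHeartbeats 1000000

open Stirling Nat in
private lemma my_fact_eq (n : ℕ) (hn : 1 ≤ n) :
    (n ! : ℝ) = stirlingSeq n * (Real.sqrt (2 * n) * ((n : ℝ) / Real.exp 1) ^ n) := by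
  have h0 : (0:ℝ) < n := by exact_mod_cast hn
  have h1 : Real.sqrt (2 * n) * ((n : ℝ) / Real.exp 1) ^ n ≠ 0 := by positivity
  rw [stirlingSeq, div_mul_cancel₀ _ h1]

open Stirling in
private lemma my_stirling_lb (n : ℕ) (hn : 1 ≤ n) : Real.sqrt π ≤ stirlingSeq n := by
  obtain ⟨k, rfl⟩ := Nat.exists_eq_add_of_le hn
  have ht : Filter.Tendsto (stirlingSeq ∘ Nat.succ) Filter.atTop (nhds (Real.sqrt π)) :=
    tendsto_stirlingSeq_sqrt_pi.comp (Filter.tendsto_add_atTop_nat 1)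
  have := stirlingSeq'_antitone.le_of_tendsto ht k
  simpa [Function.comp, Nat.succ_eq_add_one, Nat.add_comm] using this

open Stirling in
private lemma my_stirling_ub (n : ℕ) (hn : 1 ≤ n) :
    stirlingSeq n ≤ Real.exp 1 / Real.sqrt 2 := by
  obtain ⟨k, rfl⟩ := Nat.exists_eq_add_of_le hn
  have := stirlingSeq'_antitone (Nat.zero_le k)
  simpa [Function.comp, Nat.succ_eq_add_one, Nat.add_comm, stirlingSeq_one] using this

private lemma my_key_num : Real.exp 1 / Real.sqrt 2 / π ≤ Real.exp (1/12) / Real.sqrt π := by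
  have h2 : (Real.sqrt 2) ^ 12 = 64 := by
    have h : (Real.sqrt 2) ^ 12 = ((Real.sqrt 2) ^ 2) ^ 6 := by ring
    rw [h, Real.sq_sqrt (by norm_num : (0:ℝ) ≤ 2)]; norm_num
  have hp : (Real.sqrt π) ^ 12 = π ^ 6 := by
    have h : (Real.sqrt π) ^ 12 = ((Real.sqrt π) ^ 2) ^ 6 := by ring
    rw [h, Real.sq_sqrt Real.pi_pos.le]
  have he : (Real.exp (1/12)) ^ 12 = Real.exp 1 := by
    rw [← Real.exp_nat_mul]; norm_num
  have hkey : Real.exp 1 ^ 11 ≤ 64 * π ^ 6 := by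
    have he1 : Real.exp 1 ≤ 2.7182818286 := Real.exp_one_lt_d9.le
    have hp1 : (3.141592 : ℝ) ≤ π := Real.pi_gt_d6.le
    calc Real.exp 1 ^ 11 ≤ (2.7182818286 : ℝ) ^ 11 :=
          pow_le_pow_left₀ (Real.exp_pos 1).le he1 11
      _ ≤ 64 * (3.141592 : ℝ) ^ 6 := by norm_num
      _ ≤ 64 * π ^ 6 := by gcongr
  have h0 : (0:ℝ) ≤ Real.exp 1 / Real.sqrt 2 / π := by positivity
  have h1 : (0:ℝ) ≤ Real.exp (1/12) / Real.sqrt π := by positivity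
  refine le_of_pow_le_pow_left₀ (by norm_num : (12:ℕ) ≠ 0) h1 ?_
  rw [div_pow, div_pow, div_pow, h2, hp, he]
  rw [div_le_div_iff₀ (by positivity) (by positivity)]
  nlinarith [mul_le_mul_of_nonneg_left hkey
    (show (0:ℝ) ≤ Real.exp 1 * π ^ 6 by positivity)]

theorem stmt9 (m i : ℕ) (hm : 2 ≤ m) (hi1 : 1 ≤ i) (hi2 : i ≤ m - 1) :
    (Nat.choose m i : ℝ) * (i : ℝ) ^ i * ((m : ℝ) - i) ^ (m - i) / (m : ℝ) ^ m ≤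
      Real.exp (1 / 12) * Real.sqrt ((m : ℝ) / (2 * π * i * ((m : ℝ) - i))) ∧
    (Nat.choose m i : ℝ) * ((i : ℝ) / m) ^ i * (((m : ℝ) - i) / m) ^ (m - i) ≤
      Real.exp (1 / 12) * Real.sqrt m / Real.sqrt (2 * π * i) := by
  obtain ⟨j, rfl⟩ : ∃ j, m = i + j := ⟨m - i, by omega⟩
  have hj1 : 1 ≤ j := by omega
  have hij : i + j - i = j := by omega
  rw [hij]
  have hir : (0:ℝ) < i := by exact_mod_cast hi1
  have hjr : (0:ℝ) < j := by exact_mod_cast hj1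
  have hmr : ((i + j : ℕ) : ℝ) = (i:ℝ) + j := by push_cast; ring
  have hsub : ((i + j : ℕ) : ℝ) - (i:ℝ) = (j:ℝ) := by rw [hmr]; ring
  rw [hsub]
  have hmpos : (0:ℝ) < ((i + j : ℕ) : ℝ) := by rw [hmr]; linarith
  set e1 : ℝ := Real.exp 1 with he1
  set Dm : ℝ := Real.sqrt (2 * ((i + j : ℕ) : ℝ)) * (((i + j : ℕ) : ℝ) / e1) ^ (i + j) with hDm
  set Di : ℝ := Real.sqrt (2 * (i : ℝ)) * ((i : ℝ) / e1) ^ i with hDi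
  set Dj : ℝ := Real.sqrt (2 * (j : ℝ)) * ((j : ℝ) / e1) ^ j with hDj
  have hDm0 : 0 < Dm := by rw [hDm]; positivity
  have hDi0 : 0 < Di := by rw [hDi]; positivity
  have hDj0 : 0 < Dj := by rw [hDj]; positivity
  have hfub : ((i + j).factorial : ℝ) ≤ e1 / Real.sqrt 2 * Dm := by
    rw [my_fact_eq (i + j) (by omega)]
    exact mul_le_mul_of_nonneg_right (my_stirling_ub (i + j) (by omega)) hDm0.le
  have hfi : Real.sqrt π * Di ≤ (i.factorial : ℝ) := by
    rw [my_fact_eq i hi1]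
    exact mul_le_mul_of_nonneg_right (my_stirling_lb i hi1) hDi0.le
  have hfj : Real.sqrt π * Dj ≤ (j.factorial : ℝ) := by
    rw [my_fact_eq j hj1]
    exact mul_le_mul_of_nonneg_right (my_stirling_lb j hj1) hDj0.le
  have hden : π * (Di * Dj) ≤ (i.factorial : ℝ) * j.factorial := by
    calc π * (Di * Dj) = (Real.sqrt π * Di) * (Real.sqrt π * Dj) := by
          have hss : Real.sqrt π * Real.sqrt π = π := Real.mul_self_sqrt Real.pi_pos.le
          linear_combination Di * Dj * hss.symm
      _ ≤ (i.factorial : ℝ) * j.factorial :=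
          mul_le_mul hfi hfj (by positivity) (Nat.cast_nonneg _)
  have hc : ((i + j).choose i : ℝ) = ((i + j).factorial : ℝ) / (i.factorial * j.factorial) := by
    rw [Nat.cast_choose ℝ (Nat.le_add_right i j), hij]
  set a : ℝ := Real.sqrt (2 * ((i + j : ℕ) : ℝ)) with ha
  set b : ℝ := Real.sqrt (2 * (i : ℝ)) with hb
  set c : ℝ := Real.sqrt (2 * (j : ℝ)) with hcdef
  have ha0 : 0 < a := by rw [ha]; positivity
  have hb0 : 0 < b := by rw [hb]; positivity
  have hc0 : 0 < c := by rw [hcdef]; positivity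
  have h1 : ((i + j).choose i : ℝ) * (i : ℝ) ^ i * (j : ℝ) ^ j / ((i + j : ℕ) : ℝ) ^ (i + j) ≤
      e1 / Real.sqrt 2 / π * (a / (b * c)) := by
    have step1 : ((i + j).choose i : ℝ) * (i : ℝ) ^ i * (j : ℝ) ^ j / ((i + j : ℕ) : ℝ) ^ (i + j)
        = ((i + j).factorial : ℝ) * ((i : ℝ) ^ i * (j : ℝ) ^ j) /
          ((i.factorial : ℝ) * j.factorial * ((i + j : ℕ) : ℝ) ^ (i + j)) := by
      rw [hc]
      have h1' : (i.factorial : ℝ) ≠ 0 := by positivity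
      have h2' : (j.factorial : ℝ) ≠ 0 := by positivity
      have h3' : ((i + j : ℕ) : ℝ) ^ (i + j) ≠ 0 := by positivity
      field_simp
    rw [step1]
    have step2 : ((i + j).factorial : ℝ) * ((i : ℝ) ^ i * (j : ℝ) ^ j) /
          ((i.factorial : ℝ) * j.factorial * ((i + j : ℕ) : ℝ) ^ (i + j)) ≤
        (e1 / Real.sqrt 2 * Dm) * ((i : ℝ) ^ i * (j : ℝ) ^ j) /
          ((π * (Di * Dj)) * ((i + j : ℕ) : ℝ) ^ (i + j)) := by
      apply div_le_div₀ (by positivity)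
        (mul_le_mul_of_nonneg_right hfub (by positivity)) (by positivity)
      exact mul_le_mul_of_nonneg_right hden (by positivity)
    refine step2.trans (le_of_eq ?_)
    have he0 : e1 ≠ 0 := Real.exp_ne_zero 1
    have hs2 : Real.sqrt 2 ≠ 0 := by positivity
    have hij0 : ((i:ℝ) + j) ≠ 0 := by positivity
    have hpi0 : π ≠ 0 := Real.pi_ne_zero
    have hb' : b ≠ 0 := hb0.ne'
    have hc' : c ≠ 0 := hc0.ne'
    field_simp
    rw [hDm, hDi, hDj, hmr, div_pow, div_pow, div_pow]
    field_simp
    ring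
  have key2 : e1 / Real.sqrt 2 / π * (a / (b * c)) ≤
      Real.exp (1/12) / Real.sqrt π * (a / (b * c)) :=
    mul_le_mul_of_nonneg_right my_key_num (by positivity)
  have h3 : Real.exp (1/12) / Real.sqrt π * (a / (b * c)) =
      Real.exp (1 / 12) * Real.sqrt (((i + j : ℕ) : ℝ) / (2 * π * i * j)) := by
    have harg : ((i + j : ℕ) : ℝ) / (2 * π * (i:ℝ) * (j:ℝ))
        = (2 * ((i + j : ℕ) : ℝ)) / (π * ((2 * (i:ℝ)) * (2 * (j:ℝ)))) := by
      rw [div_eq_div_iff (by positivity) (by positivity)]; ring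
    rw [harg, Real.sqrt_div (by positivity : (0:ℝ) ≤ 2 * ((i + j : ℕ) : ℝ)),
      Real.sqrt_mul Real.pi_pos.le (2 * (i:ℝ) * (2 * (j:ℝ))),
      Real.sqrt_mul (by positivity : (0:ℝ) ≤ 2 * (i:ℝ)) (2 * (j:ℝ)), ← ha, ← hb, ← hcdef]
    have hsp : Real.sqrt π ≠ 0 := by positivity
    field_simp
  have part1 : ((i + j).choose i : ℝ) * (i : ℝ) ^ i * (j : ℝ) ^ j / ((i + j : ℕ) : ℝ) ^ (i + j) ≤
      Real.exp (1 / 12) * Real.sqrt (((i + j : ℕ) : ℝ) / (2 * π * i * j)) := by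
    rw [← h3]; exact h1.trans key2
  constructor
  · exact part1
  · have heq : ((i + j).choose i : ℝ) * ((i : ℝ) / ((i + j : ℕ) : ℝ)) ^ i *
        ((j : ℝ) / ((i + j : ℕ) : ℝ)) ^ j =
        ((i + j).choose i : ℝ) * (i : ℝ) ^ i * (j : ℝ) ^ j / ((i + j : ℕ) : ℝ) ^ (i + j) := by
      rw [div_pow, div_pow, pow_add]
      field_simp
    rw [heq]
    refine part1.trans ?_
    have hmono : Real.sqrt (((i + j : ℕ) : ℝ) / (2 * π * i * j)) ≤
        Real.sqrt (((i + j : ℕ) : ℝ) / (2 * π * i)) := by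
      apply Real.sqrt_le_sqrt
      have hj1r : (1:ℝ) ≤ (j:ℝ) := by exact_mod_cast hj1
      apply div_le_div_of_nonneg_left hmpos.le
        (show (0:ℝ) < 2 * π * (i:ℝ) by positivity)
      nlinarith [Real.pi_pos, hir, hj1r, mul_nonneg
        (mul_nonneg (by positivity : (0:ℝ) ≤ 2 * π) hir.le) (sub_nonneg.mpr hj1r)]
    have hdiv : Real.sqrt (((i + j : ℕ) : ℝ) / (2 * π * i)) =
        Real.sqrt ((i + j : ℕ) : ℝ) / Real.sqrt (2 * π * i) := by
      rw [Real.sqrt_div hmpos.le]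
    calc Real.exp (1 / 12) * Real.sqrt (((i + j : ℕ) : ℝ) / (2 * π * i * j))
        ≤ Real.exp (1 / 12) * Real.sqrt (((i + j : ℕ) : ℝ) / (2 * π * i)) :=
          mul_le_mul_of_nonneg_left hmono (Real.exp_pos _).le
      _ = Real.exp (1 / 12) * Real.sqrt ((i + j : ℕ) : ℝ) / Real.sqrt (2 * π * i) := by
          rw [hdiv]; ring
end
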